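/- Let β be a Pisot number, T the β-transformation, and P = {x ∈ ℤ[β] ∩ [0,1) : T^k(x) = x for some k ≥ 1}. Assume the weak finiteness property (W): for every x ∈ P there exist y ∈ [0, 1−x) and n ∈ ℕ with T^n(x+y) = 0 and T^n(y) = 0. Then for every x ∈ P and every ε > 0 there exist y ∈ [0, ε) with x + y < 1 and n ∈ ℕ such that T^n(x+y) = 0 and T^n(y) = 0. -/

import Mathlib

noncomputable section

open IntermediateField

/-- A Pisot number: a real algebraic integer `β > 1` such that every ring embedding
`σ : ℚ(β) → ℂ` with `σ(β) ≠ β` satisfies `|σ(β)| < 1`. -/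
def IsPisot (β : ℝ) : Prop :=
  1 < β ∧ IsIntegral ℤ β ∧
    ∀ σ : ℚ⟮β⟯ →+* ℂ, σ (AdjoinSimple.gen ℚ β) ≠ (β : ℂ) →
      ‖σ (AdjoinSimple.gen ℚ β)‖ < 1

/-- The β-transformation `T(x) = βx − ⌊βx⌋`. -/
def betaT (β : ℝ) (x : ℝ) : ℝ := Int.fract (β * x)

/-- The set `P = Pur(β) ∩ ℤ[β]` of purely periodic points lying in `ℤ[β]`. -/
def purZbeta (β : ℝ) : Set ℝ :=
  {x | x ∈ Set.Ico (0 : ℝ) 1 ∧ x ∈ Algebra.adjoin ℤ ({β} : Set ℝ) ∧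
    ∃ k : ℕ, 1 ≤ k ∧ (betaT β)^[k] x = x}

private lemma fract_shift {a s : ℝ} (h0 : 0 ≤ Int.fract a + s) (h1 : Int.fract a + s < 1) :
    Int.fract (a + s) = Int.fract a + s := by
  have h : a + s = (Int.fract a + s) + (⌊a⌋ : ℝ) := by rw [Int.fract]; ring
  rw [h, Int.fract_add_intCast, Int.fract_eq_self.mpr ⟨h0, h1⟩]

/-- Linear transport of a small nonnegative perturbation along the orbit. -/
private lemma betaT_transport {β : ℝ} (hβ : 0 < β) {t : ℝ} (ht : 0 ≤ t) (z : ℝ) :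
    ∀ N : ℕ, (∀ j, j ≤ N → (betaT β)^[j] z + β ^ j * t < 1) →
      (betaT β)^[N] (z + t) = (betaT β)^[N] z + β ^ N * t := by
  intro N
  induction N with
  | zero => intro _; simp
  | succ N ih =>
    intro h
    have hN := ih (fun j hj => h j (Nat.le_succ_of_le hj))
    rw [Function.iterate_succ_apply', Function.iterate_succ_apply', hN]
    show Int.fract (β * ((betaT β)^[N] z + β ^ N * t)) = _
    have he : β * ((betaT β)^[N] z + β ^ N * t) = β * (betaT β)^[N] z + β ^ (N + 1) * t := by
      ring
    rw [he]
    have hfr : Int.fract (β * (betaT β)^[N] z) = (betaT β)^[N + 1] z := by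
      rw [Function.iterate_succ_apply']; rfl
    have h0 : 0 ≤ Int.fract (β * (betaT β)^[N] z) + β ^ (N + 1) * t :=
      add_nonneg (Int.fract_nonneg _) (mul_nonneg (pow_nonneg hβ.le _) ht)
    have h1 : Int.fract (β * (betaT β)^[N] z) + β ^ (N + 1) * t < 1 := by
      rw [hfr]; exact h (N + 1) le_rfl
    rw [fract_shift h0 h1, hfr, Function.iterate_succ_apply']

/-- If a Pisot number `β` satisfies the weak finiteness property (W), then for every
`x ∈ P = Pur(β) ∩ ℤ[β]` and every `ε > 0` there are `y ∈ [0,ε)` with `x + y < 1`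
and `n ∈ ℕ` with `T^n(x+y) = T^n(y) = 0`. -/
theorem weak_finiteness_small_y (β : ℝ) (hβ : IsPisot β)
    (hW : ∀ x ∈ purZbeta β, ∃ y : ℝ, 0 ≤ y ∧ y < 1 - x ∧
      ∃ n : ℕ, (betaT β)^[n] (x + y) = 0 ∧ (betaT β)^[n] y = 0) :
    ∀ x ∈ purZbeta β, ∀ ε > (0 : ℝ), ∃ y : ℝ, 0 ≤ y ∧ y < ε ∧ x + y < 1 ∧
      ∃ n : ℕ, (betaT β)^[n] (x + y) = 0 ∧ (betaT β)^[n] y = 0 := by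
  intro x hx ε hε
  obtain ⟨hxIco, hxZ, k, hk1, hkper⟩ := hx
  have hβ1 : 1 < β := hβ.1
  have hβ0 : 0 < β := lt_trans one_pos hβ1
  -- all iterates lie in [0,1)
  have horbIco : ∀ j : ℕ, (betaT β)^[j] x ∈ Set.Ico (0 : ℝ) 1 := by
    intro j
    cases j with
    | zero => simpa using hxIco
    | succ j =>
      rw [Function.iterate_succ_apply']
      exact ⟨Int.fract_nonneg _, Int.fract_lt_one _⟩
  -- reduction of the exponent modulo k
  have hmod : ∀ a : ℕ, (betaT β)^[a] x = (betaT β)^[a % k] x := by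
    intro a
    conv_lhs => rw [← Nat.mod_add_div a k]
    rw [Function.iterate_add_apply, Function.iterate_mul, Function.iterate_fixed hkper]
  -- choose a maximal point of the orbit
  obtain ⟨j0, hj0mem, hj0max⟩ := Finset.exists_max_image (Finset.range k)
    (fun j => (betaT β)^[j] x) ⟨0, Finset.mem_range.mpr hk1⟩
  have hj0k : j0 < k := Finset.mem_range.mp hj0mem
  set xs : ℝ := (betaT β)^[j0] x with hxs
  have hmax : ∀ j : ℕ, (betaT β)^[j] x ≤ xs := by
    intro j
    rw [hmod j]
    exact hj0max _ (Finset.mem_range.mpr (Nat.mod_lt _ (by omega)))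
  have hxsper : (betaT β)^[k] xs = xs := by
    rw [hxs, ← Function.iterate_add_apply, add_comm, Function.iterate_add_apply, hkper]
  have horbZ : ∀ j : ℕ, (betaT β)^[j] x ∈ Algebra.adjoin ℤ ({β} : Set ℝ) := by
    intro j
    induction j with
    | zero => simpa using hxZ
    | succ j ih =>
      rw [Function.iterate_succ_apply']
      show Int.fract (β * (betaT β)^[j] x) ∈ _
      rw [Int.fract]
      refine sub_mem (mul_mem (Algebra.subset_adjoin rfl) ih) ?_
      exact Subalgebra.intCast_mem _ _
  have hxsP : xs ∈ purZbeta β := ⟨horbIco j0, horbZ j0, k, hk1, hxsper⟩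
  obtain ⟨ys, hys0, hys1, n, hA, hB⟩ := hW xs hxsP
  have hxs0 : (0 : ℝ) ≤ xs := (horbIco j0).1
  have hyslt1 : ys < 1 := lt_of_lt_of_le hys1 (by linarith)
  have hxsys : xs + ys < 1 := by linarith
  -- choose a large exponent
  obtain ⟨m, hm⟩ := exists_pow_lt_of_lt_one hε (inv_lt_one_of_one_lt₀ hβ1)
  set r : ℕ := k - j0 with hr
  have hr1 : 1 ≤ r := by omega
  have hrj0 : r + j0 = k := by omega
  set M : ℕ := k * (r + m) with hM
  have hMr : r + m ≤ M := by
    calc r + m = 1 * (r + m) := (one_mul _).symm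
    _ ≤ k * (r + m) := Nat.mul_le_mul_right _ hk1
  set s : ℕ := M - r with hs
  have hrs : r + s = M := by omega
  have hms : m ≤ s := by omega
  set t : ℝ := ys / β ^ M with htdef
  have ht0 : 0 ≤ t := div_nonneg hys0 (pow_nonneg hβ0.le _)
  have hβM : (0 : ℝ) < β ^ M := pow_pos hβ0 _
  have hβMt : β ^ M * t = ys := by
    rw [htdef, mul_div_cancel₀ _ (ne_of_gt hβM)]
  have hpow : ∀ j : ℕ, j ≤ M → β ^ j * t ≤ ys := by
    intro j hj
    have h1 : β ^ j ≤ β ^ M := pow_le_pow_right₀ hβ1.le hj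
    calc β ^ j * t = ys * (β ^ j / β ^ M) := by rw [htdef]; ring
    _ ≤ ys * 1 := by
        refine mul_le_mul_of_nonneg_left ?_ hys0
        exact div_le_one_of_le₀ h1 (pow_nonneg hβ0.le _)
    _ = ys := mul_one _
  -- transport condition along the orbit of xs
  have hcond : ∀ j : ℕ, j ≤ M → (betaT β)^[j] xs + β ^ j * t < 1 := by
    intro j hj
    have h1 : (betaT β)^[j] xs ≤ xs := by
      rw [hxs, ← Function.iterate_add_apply]
      exact hmax _
    have h2 : β ^ j * t ≤ ys := hpow j hj
    linarith
  -- transport condition along the orbit of 0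
  have hzero : betaT β 0 = 0 := by
    show Int.fract (β * 0) = 0
    rw [mul_zero, Int.fract_zero]
  set y : ℝ := β ^ r * t with hy
  have hy0 : 0 ≤ y := mul_nonneg (pow_nonneg hβ0.le _) ht0
  have hβs : (0 : ℝ) < β ^ s := pow_pos hβ0 _
  have hyeq : y = ys * (β ^ s)⁻¹ := by
    rw [hy, htdef, ← hrs, pow_add]
    field_simp
  have hylt : y < ε := by
    have h2 : y < (β ^ s)⁻¹ := by
      rw [hyeq]
      calc ys * (β ^ s)⁻¹ < 1 * (β ^ s)⁻¹ :=
        mul_lt_mul_of_pos_right hyslt1 (inv_pos.mpr hβs)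
      _ = (β ^ s)⁻¹ := one_mul _
    have h3 : (β ^ s)⁻¹ ≤ (β ^ m)⁻¹ := by
      apply inv_anti₀ (pow_pos hβ0 _)
      exact pow_le_pow_right₀ hβ1.le hms
    have h4 : (β⁻¹) ^ m = (β ^ m)⁻¹ := inv_pow β m
    linarith [hm, h2, h3]
  -- x + y is reached from xs + t in r steps
  have hTr : (betaT β)^[r] (xs + t) = x + y := by
    rw [betaT_transport hβ0 ht0 xs r (fun j hj => hcond j (le_trans hj (by omega)))]
    have : (betaT β)^[r] xs = x := by
      rw [hxs, ← Function.iterate_add_apply, hrj0, hkper]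
    rw [this, hy]
  have hxylt : x + y < 1 := by
    rw [← hTr]
    have := hcond r (by omega)
    rw [betaT_transport hβ0 ht0 xs r (fun j hj => hcond j (le_trans hj (by omega)))] at *
    have hrx : (betaT β)^[r] xs = x := by
      rw [hxs, ← Function.iterate_add_apply, hrj0, hkper]
    rw [hrx] at this
    rw [hTr]
    calc x + y = x + β ^ r * t := by rw [hy]
    _ < 1 := by
        have h1 : (betaT β)^[r] xs ≤ xs := by
          rw [hxs, ← Function.iterate_add_apply]; exact hmax _
        have h2 : β ^ r * t ≤ ys := hpow r (by omega)
        rw [hrx] at h1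
        linarith
  -- after s more steps we reach xs + ys
  have hTM : (betaT β)^[M] (xs + t) = xs + ys := by
    rw [betaT_transport hβ0 ht0 xs M (fun j hj => hcond j hj)]
    have hMfix : (betaT β)^[M] xs = xs := by
      rw [hM, Function.iterate_mul, Function.iterate_fixed hxsper]
    rw [hMfix, hβMt]
  have hTs : (betaT β)^[s] (x + y) = xs + ys := by
    rw [← hTr, ← Function.iterate_add_apply]
    have hsr : s + r = M := by omega
    rw [hsr, hTM]
  -- y is transported to ys in s steps
  have hTsy : (betaT β)^[s] y = ys := by
    have hz : ∀ j : ℕ, (betaT β)^[j] (0 : ℝ) = 0 := fun j => Function.iterate_fixed hzero j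
    have hcondy : ∀ j : ℕ, j ≤ s → (betaT β)^[j] (0 : ℝ) + β ^ j * y < 1 := by
      intro j hj
      rw [hz j, zero_add, hy, ← mul_assoc, ← pow_add]
      have := hpow (j + r) (by omega)
      linarith
    have := betaT_transport hβ0 hy0 (0 : ℝ) s hcondy
    rw [zero_add, hz s, zero_add] at this
    rw [this, hy, ← mul_assoc, ← pow_add]
    have hsr : s + r = M := by omega
    rw [hsr, hβMt]
  refine ⟨y, hy0, hylt, hxylt, n + s, ?_, ?_⟩
  · rw [Function.iterate_add_apply, hTs, hA]
  · rw [Function.iterate_add_apply, hTsy, hB]
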